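/- The module $\Theta(\lambda, \alpha, \beta, \gamma)$ over the affine-Virasoro algebra of type $A_1$ is irreducible if and only if $2\beta \notin \mathbb{Z}_{\geq 0}$. -/

import Mathlib

open MvPolynomial

/-- `ℂ[s,t]`, with `s = X 0` and `t = X 1`. -/
noncomputable abbrev P2 : Type := MvPolynomial (Fin 2) ℂ

/-- Substitution `g(s,t) ↦ g(s - i, t + a)`. -/
noncomputable def subST (i : ℤ) (a : ℂ) : P2 →ₐ[ℂ] P2 :=
  aeval ![X 0 - C (i : ℂ), X 1 + C a]

/-- Action of `e_i` on `Θ(λ,α,β,γ)`. -/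
noncomputable def thE (lam alp bet : ℂ) (i : ℤ) (g : P2) : P2 :=
  (lam ^ i * alp) • ((C (1/2 : ℂ) * X 1 + C bet) * subST i (-2) g)

/-- Action of `f_i` on `Θ(λ,α,β,γ)`. -/
noncomputable def thF (lam alp bet : ℂ) (i : ℤ) (g : P2) : P2 :=
  (-(lam ^ i / alp)) • ((C (1/2 : ℂ) * X 1 - C bet) * subST i 2 g)

/-- Action of `h_i` on `Θ(λ,α,β,γ)`. -/
noncomputable def thH (lam : ℂ) (i : ℤ) (g : P2) : P2 :=
  lam ^ i • (X 1 * subST i 0 g)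

/-- Action of `d_i` on `Θ(λ,α,β,γ)`. -/
noncomputable def thD (lam gam : ℂ) (i : ℤ) (g : P2) : P2 :=
  lam ^ i • ((X 0 + C ((i : ℂ) * gam)) * subST i 0 g)

/-! ### Auxiliary lemmas -/

lemma vec_eta (y : Fin 2 → ℂ) : ![y 0, y 1] = y := by
  funext j; fin_cases j <;> rfl

lemma eval_subST (i : ℤ) (c : ℂ) (y : Fin 2 → ℂ) (g : P2) :
    eval y (subST i c g) = eval ![y 0 - (i : ℂ), y 1 + c] g := by
  have h : (eval y).comp ((subST i c : P2 →ₐ[ℂ] P2) : P2 →+* P2)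
      = eval ![y 0 - (i : ℂ), y 1 + c] := by
    apply ringHom_ext
    · intro a; simp [subST]
    · intro j; fin_cases j <;> simp [subST]
  exact RingHom.congr_fun h g

lemma subST_zero (g : P2) : subST 0 0 g = g := by
  have h : ![X 0 - C ((0:ℤ) : ℂ), X 1 + C (0:ℂ)] = (X : Fin 2 → P2) := by
    funext j; fin_cases j <;> simp
  rw [subST, h, aeval_X_left_apply]

lemma eval_thH (lam : ℂ) (i : ℤ) (y : Fin 2 → ℂ) (g : P2) :
    eval y (thH lam i g) = lam ^ i * (y 1 * eval ![y 0 - (i:ℂ), y 1] g) := by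
  simp [thH, smul_eq_C_mul, eval_subST]

lemma eval_thE (lam alp bet : ℂ) (i : ℤ) (y : Fin 2 → ℂ) (g : P2) :
    eval y (thE lam alp bet i g)
      = (lam ^ i * alp) * ((1/2 * y 1 + bet) * eval ![y 0 - (i:ℂ), y 1 + (-2)] g) := by
  simp [thE, smul_eq_C_mul, eval_subST]

lemma eval_thF (lam alp bet : ℂ) (i : ℤ) (y : Fin 2 → ℂ) (g : P2) :
    eval y (thF lam alp bet i g)
      = (-(lam ^ i / alp)) * ((1/2 * y 1 - bet) * eval ![y 0 - (i:ℂ), y 1 + 2] g) := by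
  simp [thF, smul_eq_C_mul, eval_subST]

lemma mulmem (W : Submodule ℂ P2)
    (hH : ∀ g ∈ W, X 1 * g ∈ W) (hD : ∀ g ∈ W, X 0 * g ∈ W) :
    ∀ p g, g ∈ W → p * g ∈ W := by
  intro p
  induction p using MvPolynomial.induction_on with
  | C a => intro g hg; rw [← smul_eq_C_mul]; exact W.smul_mem a hg
  | add p q hp hq => intro g hg; rw [add_mul]; exact W.add_mem (hp g hg) (hq g hg)
  | mul_X p j hp =>
      intro g hg
      have h1 : p * X j * g = X j * (p * g) := by ring
      rw [h1]
      fin_cases j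
      · exact hD _ (hp g hg)
      · exact hH _ (hp g hg)

lemma exists_point (W : Submodule ℂ P2) (hmul : ∀ p g, g ∈ W → p * g ∈ W)
    (hne : W ≠ ⊤) : ∃ x : Fin 2 → ℂ, ∀ g ∈ W, eval x g = 0 := by
  set I : Ideal P2 :=
    { carrier := W
      add_mem' := fun ha hb => W.add_mem ha hb
      zero_mem' := W.zero_mem
      smul_mem' := fun c x hx => by simpa [smul_eq_mul] using hmul c x hx } with hIdef
  have hmem : ∀ g : P2, g ∈ I ↔ g ∈ W := fun g => Iff.rfl
  have hI : I ≠ ⊤ := by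
    intro h
    apply hne
    rw [Submodule.eq_top_iff']
    intro p
    have h1 : (1 : P2) ∈ W := (hmem 1).mp (h ▸ Submodule.mem_top)
    simpa using hmul p 1 h1
  by_contra hx
  push_neg at hx
  have hempty : zeroLocus ℂ I = ∅ := by
    ext x
    simp only [mem_zeroLocus_iff, Set.mem_empty_iff_false, iff_false]
    intro h
    obtain ⟨g, hg, hgne⟩ := hx x
    exact hgne (by simpa [MvPolynomial.coe_aeval_eq_eval] using h g hg)
  have hrad := vanishingIdeal_zeroLocus_eq_radical (K := ℂ) I
  rw [hempty, vanishingIdeal_empty] at hrad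
  exact hI (Ideal.radical_eq_top.mp hrad.symm)

lemma eval_aeval_XC (w : P2) (a c : ℂ) :
    (MvPolynomial.aeval ![Polynomial.X, Polynomial.C c] w).eval a = eval ![a, c] w := by
  have h : (Polynomial.evalRingHom a).comp
      ((MvPolynomial.aeval ![Polynomial.X, Polynomial.C c] :
        P2 →ₐ[ℂ] Polynomial ℂ) : P2 →+* Polynomial ℂ) = eval ![a, c] := by
    apply ringHom_ext
    · intro r; simp
    · intro j; fin_cases j <;> simp
  exact RingHom.congr_fun h w

lemma eval_aeval_CX (w : P2) (a c : ℂ) :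
    (MvPolynomial.aeval ![Polynomial.C a, Polynomial.X] w).eval c = eval ![a, c] w := by
  have h : (Polynomial.evalRingHom c).comp
      ((MvPolynomial.aeval ![Polynomial.C a, Polynomial.X] :
        P2 →ₐ[ℂ] Polynomial ℂ) : P2 →+* Polynomial ℂ) = eval ![a, c] := by
    apply ringHom_ext
    · intro r; simp
    · intro j; fin_cases j <;> simp
  exact RingHom.congr_fun h w

lemma rows_kill (W : Submodule ℂ P2) (c d : ℂ) (hd : d ≠ 0)
    (hstep : ∀ a b : ℂ, (∀ g ∈ W, eval ![a, b] g = 0) → b ≠ c →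
      ∀ g ∈ W, eval ![a, b + d] g = 0)
    (hrow : ∀ a b : ℂ, b ≠ 0 → (∀ g ∈ W, eval ![a, b] g = 0) →
      ∀ i : ℤ, ∀ g ∈ W, eval ![a - (i : ℂ), b] g = 0)
    (x : Fin 2 → ℂ) (hx : ∀ g ∈ W, eval x g = 0)
    (hne : ∀ k : ℕ, x 1 + d * k ≠ c) :
    ∀ g ∈ W, g = 0 := by
  have hP : ∀ k : ℕ, ∀ g ∈ W, eval ![x 0, x 1 + d * k] g = 0 := by
    intro k
    induction k with
    | zero => simpa [vec_eta] using hx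
    | succ k ih =>
        intro g hg
        have h2 := hstep (x 0) (x 1 + d * k) ih (hne k) g hg
        have h3 : x 1 + d * ((k + 1 : ℕ) : ℂ) = x 1 + d * k + d := by push_cast; ring
        rw [h3]; exact h2
  intro w hw
  have hrowzero : ∀ k : ℕ, x 1 + d * k ≠ 0 → ∀ a : ℂ, eval ![a, x 1 + d * k] w = 0 := by
    intro k hk0 a
    have hr := hrow (x 0) (x 1 + d * k) hk0 (hP k)
    set r : Polynomial ℂ := MvPolynomial.aeval ![Polynomial.X, Polynomial.C (x 1 + d * k)] w
      with hrdef
    have hr0 : r = 0 := by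
      apply Polynomial.eq_zero_of_infinite_isRoot
      apply Set.infinite_of_injective_forall_mem (f := fun i : ℤ => x 0 - (i : ℂ))
      · intro i j hij
        have h2 : (i : ℂ) = (j : ℂ) := by
          have h3 : x 0 - (i:ℂ) = x 0 - (j:ℂ) := hij
          linear_combination -h3
        exact_mod_cast h2
      · intro i
        show r.IsRoot (x 0 - (i : ℂ))
        rw [Polynomial.IsRoot, hrdef, eval_aeval_XC]
        exact hr i w hw
    have h4 := eval_aeval_XC w a (x 1 + d * k)
    rw [hrdef] at hr0
    rw [← h4, hr0]; simp
  have hall : ∀ a b : ℂ, eval ![a, b] w = 0 := by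
    intro a
    set r : Polynomial ℂ := MvPolynomial.aeval ![Polynomial.C a, Polynomial.X] w with hrdef
    have hr0 : r = 0 := by
      apply Polynomial.eq_zero_of_infinite_isRoot
      have hsub : Set.Infinite ({ z | r.IsRoot z } ∪ {0}) := by
        apply Set.infinite_of_injective_forall_mem (f := fun k : ℕ => x 1 + d * k)
        · intro k1 k2 h12
          have h13 : d * (k1 : ℂ) = d * k2 := by
            have h14 : x 1 + d * (k1:ℂ) = x 1 + d * k2 := h12
            linear_combination h14
          have h15 := mul_left_cancel₀ hd h13
          exact_mod_cast h15
        · intro k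
          by_cases hk : x 1 + d * k = 0
          · right; simp [hk]
          · left
            show r.IsRoot (x 1 + d * k)
            rw [Polynomial.IsRoot, hrdef, eval_aeval_CX]
            exact hrowzero k hk a
      have h5 := hsub.diff (Set.finite_singleton 0)
      apply h5.mono
      intro z hz
      exact hz.1.resolve_right (by simpa using hz.2)
    intro b
    have h6 := eval_aeval_CX w a b
    rw [hrdef] at hr0
    rw [← h6, hr0]; simp
  apply MvPolynomial.funext
  intro y
  rw [← vec_eta y]
  simp [hall]

/-! ### The invariant ideal when `2β = n` -/

noncomputable def qpoly (n : ℕ) (bet : ℂ) : P2 :=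
  ∏ j ∈ Finset.range (n + 1), (C (1/2 : ℂ) * X 1 + C ((j : ℂ) - bet))

lemma subST_factor (i : ℤ) (a z : ℂ) :
    subST i a (C (1/2 : ℂ) * X 1 + C z) = C (1/2 : ℂ) * X 1 + C (a/2 + z) := by
  simp only [subST, map_add, map_mul, aeval_C, aeval_X, algebraMap_eq]
  simp only [Matrix.cons_val_one, Matrix.head_cons, Matrix.cons_val_zero]
  rw [show (C (a/2) : P2) = C (1/2:ℂ) * C a from by
    rw [← map_mul, show (1/2:ℂ) * a = a/2 from by ring]]
  ring

lemma subST_q_zero (n : ℕ) (bet : ℂ) (i : ℤ) : subST i 0 (qpoly n bet) = qpoly n bet := by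
  rw [qpoly, map_prod]
  refine Finset.prod_congr rfl fun j _ => ?_
  rw [subST_factor]; norm_num

lemma shift_prod (bet : ℂ) (n : ℕ) :
    (∏ j ∈ Finset.range (n+1), (C (1/2:ℂ) * X 1 + C ((j:ℂ) - 1 - bet)) : P2)
      = (C (1/2:ℂ) * X 1 + C (-1 - bet)) *
        ∏ j ∈ Finset.range n, (C (1/2:ℂ) * X 1 + C ((j:ℂ) - bet)) := by
  induction n with
  | zero => simp [Finset.prod_range_one]
  | succ n ih =>
      rw [Finset.prod_range_succ, ih, Finset.prod_range_succ,
        show (((n+1:ℕ)):ℂ) - 1 - bet = (n:ℂ) - bet from by push_cast; ring]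
      ring

lemma shift_prod_up (bet : ℂ) (m : ℕ) :
    ((C (1/2:ℂ) * X 1 + C (0 - bet)) *
        ∏ j ∈ Finset.range m, (C (1/2:ℂ) * X 1 + C ((j:ℂ) + 1 - bet)) : P2)
      = (∏ j ∈ Finset.range m, (C (1/2:ℂ) * X 1 + C ((j:ℂ) - bet))) *
        (C (1/2:ℂ) * X 1 + C ((m:ℂ) - bet)) := by
  induction m with
  | zero => simp
  | succ m ih =>
      rw [Finset.prod_range_succ, Finset.prod_range_succ,
        show (((m+1:ℕ)):ℂ) - bet = (m:ℂ) + 1 - bet from by push_cast; ring]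
      rw [← mul_assoc, ih]
      try ring

lemma key_down (n : ℕ) (bet : ℂ) (hn : 2 * bet = n) (i : ℤ) :
    (C (1/2 : ℂ) * X 1 + C bet) * subST i (-2) (qpoly n bet)
      = (C (1/2 : ℂ) * X 1 + C (-1 - bet)) * qpoly n bet := by
  have h1 : subST i (-2) (qpoly n bet)
      = ∏ j ∈ Finset.range (n + 1), (C (1/2 : ℂ) * X 1 + C ((j : ℂ) - 1 - bet)) := by
    rw [qpoly, map_prod]
    refine Finset.prod_congr rfl fun j _ => ?_
    rw [subST_factor, show (-2:ℂ)/2 + ((j:ℂ) - bet) = (j:ℂ) - 1 - bet from by ring]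
  rw [h1, shift_prod bet n, qpoly, Finset.prod_range_succ,
    show (C bet : P2) = C ((n:ℂ) - bet) from congrArg C (by linear_combination hn)]
  ring

lemma key_up (n : ℕ) (bet : ℂ) (i : ℤ) :
    (C (1/2 : ℂ) * X 1 - C bet) * subST i 2 (qpoly n bet)
      = (C (1/2 : ℂ) * X 1 + C ((n:ℂ) + 1 - bet)) * qpoly n bet := by
  have h1 : subST i 2 (qpoly n bet)
      = ∏ j ∈ Finset.range (n + 1), (C (1/2 : ℂ) * X 1 + C ((j : ℂ) + 1 - bet)) := by
    rw [qpoly, map_prod]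
    refine Finset.prod_congr rfl fun j _ => ?_
    rw [subST_factor, show (2:ℂ)/2 + ((j:ℂ) - bet) = (j:ℂ) + 1 - bet from by ring]
  have h2 : (C (1/2:ℂ) * X 1 : P2) - C bet = C (1/2:ℂ) * X 1 + C (0 - bet) := by
    rw [show (0:ℂ) - bet = -bet from by ring, map_neg]; ring
  rw [h1, h2, shift_prod_up bet (n+1), qpoly,
    show (((n+1:ℕ)):ℂ) - bet = (n:ℂ) + 1 - bet from by push_cast; ring]
  ring

lemma eval_qpoly_root (n : ℕ) (bet : ℂ) : eval ![(0:ℂ), 2*bet] (qpoly n bet) = 0 := by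
  rw [qpoly, map_prod]
  apply Finset.prod_eq_zero (Finset.mem_range.mpr (Nat.succ_pos n))
  simp only [map_add, map_mul, eval_C, eval_X, Matrix.cons_val_one, Matrix.head_cons,
    Nat.cast_zero, Matrix.cons_val_zero]
  ring

lemma eval_qpoly_ne (n : ℕ) (bet : ℂ) : eval ![(0:ℂ), 2*bet + 2] (qpoly n bet) ≠ 0 := by
  rw [qpoly, map_prod]
  rw [Finset.prod_ne_zero_iff]
  intro j _
  have : eval ![(0:ℂ), 2*bet + 2] (C (1/2:ℂ) * X 1 + C ((j:ℂ) - bet)) = (j:ℂ) + 1 := by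
    simp only [map_add, map_mul, eval_C, eval_X, Matrix.cons_val_one, Matrix.head_cons, Matrix.cons_val_zero]
    ring
  rw [this]
  have : ((j:ℂ) + 1) = ((j+1 : ℕ) : ℂ) := by push_cast; ring
  rw [this]
  exact_mod_cast Nat.succ_ne_zero j

/-- The module `Θ(λ,α,β,γ)` over the affine-Virasoro algebra of type `A₁` is irreducible if
and only if `2β ∉ ℤ≥0`. -/
theorem stmt11 (lam alp : ℂ) (hlam : lam ≠ 0) (halp : alp ≠ 0) (bet gam : ℂ) :
    (∀ W : Submodule ℂ P2,
        (∀ (i : ℤ), ∀ g ∈ W, thE lam alp bet i g ∈ W ∧ thF lam alp bet i g ∈ W ∧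
          thH lam i g ∈ W ∧ thD lam gam i g ∈ W) →
        W = ⊥ ∨ W = ⊤) ↔
      ¬ ∃ n : ℕ, 2 * bet = (n : ℂ) := by
  constructor
  · -- irreducible → 2β ∉ ℕ
    intro hirr
    rintro ⟨n, hn⟩
    let W : Submodule ℂ P2 := Submodule.restrictScalars ℂ (Ideal.span {qpoly n bet})
    have hmemW : ∀ g : P2, g ∈ W ↔ ∃ c, c * qpoly n bet = g := by
      intro g
      rw [Submodule.restrictScalars_mem]
      exact Ideal.mem_span_singleton'
    have hinv : ∀ (i : ℤ), ∀ g ∈ W, thE lam alp bet i g ∈ W ∧ thF lam alp bet i g ∈ W ∧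
        thH lam i g ∈ W ∧ thD lam gam i g ∈ W := by
      intro i g hg
      obtain ⟨c, hc⟩ := (hmemW g).mp hg
      subst hc
      refine ⟨(hmemW _).mpr ⟨(lam ^ i * alp) • ((C (1/2:ℂ) * X 1 + C (-1-bet)) * subST i (-2) c), ?_⟩,
        (hmemW _).mpr ⟨(-(lam ^ i / alp)) • ((C (1/2:ℂ) * X 1 + C ((n:ℂ)+1-bet)) * subST i 2 c), ?_⟩,
        (hmemW _).mpr ⟨lam ^ i • (X 1 * subST i 0 c), ?_⟩,
        (hmemW _).mpr ⟨lam ^ i • ((X 0 + C ((i:ℂ) * gam)) * subST i 0 c), ?_⟩⟩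
      · rw [thE, show subST i (-2) (c * qpoly n bet)
            = subST i (-2) c * subST i (-2) (qpoly n bet) from map_mul _ _ _]
        simp only [smul_eq_C_mul]
        linear_combination (-(C (lam ^ i * alp) * subST i (-2) c) : P2) * key_down n bet hn i
      · rw [thF, show subST i 2 (c * qpoly n bet)
            = subST i 2 c * subST i 2 (qpoly n bet) from map_mul _ _ _]
        simp only [smul_eq_C_mul]
        linear_combination (-(C (-(lam ^ i / alp)) * subST i 2 c) : P2) * key_up n bet i
      · rw [thH, show subST i 0 (c * qpoly n bet)
            = subST i 0 c * subST i 0 (qpoly n bet) from map_mul _ _ _]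
        simp only [smul_eq_C_mul]
        linear_combination (-(C (lam ^ i) * X 1 * subST i 0 c) : P2) * subST_q_zero n bet i
      · rw [thD, show subST i 0 (c * qpoly n bet)
            = subST i 0 c * subST i 0 (qpoly n bet) from map_mul _ _ _]
        simp only [smul_eq_C_mul]
        linear_combination (-(C (lam ^ i) * (X 0 + C ((i:ℂ) * gam)) * subST i 0 c) : P2) *
          subST_q_zero n bet i
    rcases hirr W hinv with hbot | htop
    · have hqW : qpoly n bet ∈ W := (hmemW _).mpr ⟨1, one_mul _⟩
      rw [hbot, Submodule.mem_bot] at hqW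
      exact eval_qpoly_ne n bet (by rw [hqW, map_zero])
    · have h1 : (1:P2) ∈ W := htop ▸ Submodule.mem_top
      obtain ⟨c, hc⟩ := (hmemW 1).mp h1
      have h2 := congrArg (eval ![(0:ℂ), 2*bet]) hc
      rw [map_mul, map_one] at h2
      have h3 : eval ![(0:ℂ), 2*bet] (qpoly n bet) = 0 := eval_qpoly_root n bet
      rw [h3, mul_zero] at h2
      exact one_ne_zero h2.symm
  · -- 2β ∉ ℕ → irreducible
    intro hbet W hW
    by_cases hT : W = ⊤
    · right; exact hT
    left
    have hH0 : ∀ g ∈ W, X 1 * g ∈ W := by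
      intro g hg
      have h1 := (hW 0 g hg).2.2.1
      rwa [thH, subST_zero, zpow_zero, one_smul] at h1
    have hD0 : ∀ g ∈ W, X 0 * g ∈ W := by
      intro g hg
      have h1 := (hW 0 g hg).2.2.2
      rw [thD, subST_zero, zpow_zero, one_smul] at h1
      simpa using h1
    have hmul := mulmem W hH0 hD0
    obtain ⟨x, hx⟩ := exists_point W hmul hT
    have hrow : ∀ a b : ℂ, b ≠ 0 → (∀ g ∈ W, eval ![a, b] g = 0) →
        ∀ i : ℤ, ∀ g ∈ W, eval ![a - (i : ℂ), b] g = 0 := by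
      intro a b hb hv i g hg
      have h1 := hv _ ((hW i g hg).2.2.1)
      rw [eval_thH] at h1
      simp only [Matrix.cons_val_zero, Matrix.cons_val_one, Matrix.head_cons] at h1
      rcases mul_eq_zero.mp h1 with h | h2
      · exact absurd h (zpow_ne_zero i hlam)
      rcases mul_eq_zero.mp h2 with h | h3
      · exact absurd h hb
      exact h3
    by_cases hup : ∃ k : ℕ, x 1 + 2 * k = 2 * bet
    · -- go downward with e
      obtain ⟨k0, hk0⟩ := hup
      have hne : ∀ k : ℕ, x 1 + (-2) * k ≠ -(2 * bet) := by
        intro k h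
        exact hbet ⟨k0 + k, by push_cast; linear_combination (h - hk0)/2⟩
      have hstep : ∀ a b : ℂ, (∀ g ∈ W, eval ![a, b] g = 0) → b ≠ -(2 * bet) →
          ∀ g ∈ W, eval ![a, b + (-2)] g = 0 := by
        intro a b hv hb g hg
        have h1 := hv _ ((hW 0 g hg).1)
        rw [eval_thE] at h1
        simp only [Matrix.cons_val_zero, Matrix.cons_val_one, Matrix.head_cons,
          Int.cast_zero, sub_zero] at h1
        rcases mul_eq_zero.mp h1 with h | h2
        · exact absurd h (mul_ne_zero (zpow_ne_zero 0 hlam) halp)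
        rcases mul_eq_zero.mp h2 with h | h3
        · exact absurd (show b = -(2*bet) from by linear_combination 2 * h) hb
        exact h3
      have hkill := rows_kill W (-(2 * bet)) (-2) (by norm_num) hstep hrow x hx hne
      rw [eq_bot_iff]
      intro g hg
      exact (Submodule.mem_bot ℂ).mpr (hkill g hg)
    · -- go upward with f
      push_neg at hup
      have hstep : ∀ a b : ℂ, (∀ g ∈ W, eval ![a, b] g = 0) → b ≠ 2 * bet →
          ∀ g ∈ W, eval ![a, b + 2] g = 0 := by
        intro a b hv hb g hg
        have h1 := hv _ ((hW 0 g hg).2.1)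
        rw [eval_thF] at h1
        simp only [Matrix.cons_val_zero, Matrix.cons_val_one, Matrix.head_cons,
          Int.cast_zero, sub_zero] at h1
        rcases mul_eq_zero.mp h1 with h | h2
        · exact absurd h (neg_ne_zero.mpr (div_ne_zero (zpow_ne_zero 0 hlam) halp))
        rcases mul_eq_zero.mp h2 with h | h3
        · exact absurd (show b = 2*bet from by linear_combination 2 * h) hb
        exact h3
      have hkill := rows_kill W (2 * bet) 2 two_ne_zero hstep hrow x hx hup
      rw [eq_bot_iff]
      intro g hg
      exact (Submodule.mem_bot ℂ).mpr (hkill g hg)
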